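/- Diagonal convergence of integrals: Let E be a separable metric space, E_N ⊆ E subsets, ψ : E → ℂ bounded continuous. Let F_N : E_N → ℝ be uniformly bounded functions such that for every subsequence there is a further subsequence (N_j) along which sup_{x ∈ J ∩ E_{N_j}}|F(x) − F_{N_j}(x)| → 0 for every compact J and F_{N_j}(π_{N_j}(x)) → F(x) pointwise, where F : E → ℝ is a fixed bounded continuous function. Suppose ρ_N are finite (complex) Borel measures supported on E_N converging weakly to a finite measure ρ on E, with the sequence (|ρ_N|) tight. Then ∫ F_N ψ dρ_N → ∫ F ψ dρ. -/

import Mathlib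

open MeasureTheory Filter Set

/-- Diagonal convergence of integrals: if `F_N` (uniformly bounded, supported on `E_N`)
converges to `F` along further subsequences of every subsequence (uniformly on compacts
and pointwise through the projections), `ψ` is bounded continuous, and `ρ_N → ρ` weakly
with `(ρ_N)` tight and `ρ_N` supported on `E_N`, then `∫ F_N ψ dρ_N → ∫ F ψ dρ`. -/
theorem stmt_7 {E : Type*} [MetricSpace E] [TopologicalSpace.SeparableSpace E]
    [MeasurableSpace E] [BorelSpace E]
    (EN : ℕ → Set E) (π : ℕ → E → E) (hπmem : ∀ N x, π N x ∈ EN N)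
    (hπdist : ∀ N x, dist x (π N x) = Metric.infDist x (EN N))
    (ψ : BoundedContinuousFunction E ℂ)
    (F : ℕ → E → ℝ) (M : ℝ) (hbound : ∀ N x, |F N x| ≤ M)
    (Flim : E → ℝ) (hFlimcont : Continuous Flim) (hFlimbdd : ∀ x, |Flim x| ≤ M)
    (hFsub : ∀ φ : ℕ → ℕ, StrictMono φ → ∃ φ' : ℕ → ℕ, StrictMono φ' ∧
      (∀ J : Set E, IsCompact J → ∀ ε : ℝ, 0 < ε →
        ∀ᶠ j in atTop, ∀ x ∈ J ∩ EN (φ (φ' j)), |F (φ (φ' j)) x - Flim x| ≤ ε) ∧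
      (∀ x, Tendsto (fun j => F (φ (φ' j)) (π (φ (φ' j)) x)) atTop (nhds (Flim x))))
    (ρN : ℕ → Measure E) (ρ : Measure E)
    [∀ N, IsFiniteMeasure (ρN N)] [IsFiniteMeasure ρ]
    (hsupp : ∀ N, (ρN N) (EN N)ᶜ = 0)
    (hweak : ∀ g : BoundedContinuousFunction E ℝ,
      Tendsto (fun N => ∫ x, g x ∂(ρN N)) atTop (nhds (∫ x, g x ∂ρ)))
    (htight : ∀ ε : ℝ, 0 < ε → ∃ J : Set E, IsCompact J ∧
      ∀ᶠ N in atTop, ((ρN N) Jᶜ).toReal ≤ ε)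
    (hmeas : ∀ N, AEStronglyMeasurable (fun x => (F N x : ℂ) * ψ x) (ρN N)) :
    Tendsto (fun N => ∫ x, (F N x : ℂ) * ψ x ∂(ρN N)) atTop
      (nhds (∫ x, (Flim x : ℂ) * ψ x ∂ρ)) := by
  rcases isEmpty_or_nonempty E with hE | hE
  · have h0 : ∀ μ : Measure E, μ = 0 := fun μ => Subsingleton.elim μ 0
    simp only [h0, integral_zero_measure]
    exact tendsto_const_nhds
  have hM : 0 ≤ M := le_trans (abs_nonneg _) (hbound 0 hE.some)
  have hψ : ∀ x, ‖ψ x‖ ≤ ‖ψ‖ := fun x => ψ.norm_coe_le_norm x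
  have hψ0 : 0 ≤ ‖ψ‖ := norm_nonneg ψ
  -- the limit integrand as bounded continuous functions (real/imaginary parts)
  set gre : BoundedContinuousFunction E ℝ :=
    BoundedContinuousFunction.ofNormedAddCommGroup (fun x => Flim x * (ψ x).re)
      (hFlimcont.mul (Complex.continuous_re.comp ψ.continuous)) (M * ‖ψ‖)
      (fun x => by
        rw [Real.norm_eq_abs, abs_mul]
        exact mul_le_mul (hFlimbdd x) (le_trans (Complex.abs_re_le_norm _) (hψ x))
          (abs_nonneg _) hM) with hgre
  set gim : BoundedContinuousFunction E ℝ :=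
    BoundedContinuousFunction.ofNormedAddCommGroup (fun x => Flim x * (ψ x).im)
      (hFlimcont.mul (Complex.continuous_im.comp ψ.continuous)) (M * ‖ψ‖)
      (fun x => by
        rw [Real.norm_eq_abs, abs_mul]
        exact mul_le_mul (hFlimbdd x) (le_trans (Complex.abs_im_le_norm _) (hψ x))
          (abs_nonneg _) hM) with hgim
  -- integrability of the limit integrand
  have hFlimInt : ∀ (μ : Measure E) [IsFiniteMeasure μ],
      Integrable (fun x => (Flim x : ℂ) * ψ x) μ := by
    intro μ _
    refine ⟨((Complex.continuous_ofReal.comp hFlimcont).mul ψ.continuous).aestronglyMeasurable,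
      HasFiniteIntegral.of_bounded (C := M * ‖ψ‖) (ae_of_all μ fun x => ?_)⟩
    rw [norm_mul, Complex.norm_real, Real.norm_eq_abs]
    exact mul_le_mul (hFlimbdd x) (hψ x) (norm_nonneg _) hM
  -- decomposition of the complex integral of the limit integrand
  have hdec : ∀ (μ : Measure E) [IsFiniteMeasure μ],
      ∫ x, (Flim x : ℂ) * ψ x ∂μ = (∫ x, gre x ∂μ : ℝ) + (∫ x, gim x ∂μ : ℝ) * Complex.I := by
    intro μ _
    rw [← integral_re_add_im (hFlimInt μ)]
    norm_num [hgre, hgim, BoundedContinuousFunction.coe_ofNormedAddCommGroup,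
      RCLike.re_to_complex, RCLike.im_to_complex, Complex.re_ofReal_mul, Complex.im_ofReal_mul]
  -- weak convergence for the (complex) limit integrand
  have hweakC : Tendsto (fun N => ∫ x, (Flim x : ℂ) * ψ x ∂(ρN N)) atTop
      (nhds (∫ x, (Flim x : ℂ) * ψ x ∂ρ)) := by
    simp only [hdec]
    exact ((Complex.continuous_ofReal.tendsto _).comp (hweak gre)).add
      (((Complex.continuous_ofReal.tendsto _).comp (hweak gim)).mul_const Complex.I)
  -- uniform bound on total masses
  obtain ⟨Cm, hCm⟩ : ∃ Cm : ℝ, ∀ N, ((ρN N) univ).toReal ≤ Cm := by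
    have h1 := hweak (BoundedContinuousFunction.const E (1 : ℝ))
    simp only [BoundedContinuousFunction.const_apply', integral_const,
      smul_eq_mul, mul_one] at h1
    obtain ⟨Cm, hCm⟩ := h1.bddAbove_range
    exact ⟨Cm, fun N => hCm ⟨N, rfl⟩⟩
  have hCm0 : 0 ≤ Cm := le_trans ENNReal.toReal_nonneg (hCm 0)
  -- integrability of F N * ψ
  have hFInt : ∀ N, Integrable (fun x => (F N x : ℂ) * ψ x) (ρN N) := by
    intro N
    refine ⟨hmeas N, HasFiniteIntegral.of_bounded (C := M * ‖ψ‖) (ae_of_all _ fun x => ?_)⟩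
    rw [norm_mul, Complex.norm_real, Real.norm_eq_abs]
    exact mul_le_mul (hbound N x) (hψ x) (norm_nonneg _) hM
  -- subsequence argument
  apply tendsto_of_subseq_tendsto
  intro ns hns
  obtain ⟨ms, hms, hcomp⟩ := strictMono_subseq_of_tendsto_atTop hns
  obtain ⟨φ', hφ', hunif, _⟩ := hFsub (ns ∘ ms) hcomp
  refine ⟨ms ∘ φ', ?_⟩
  set σ : ℕ → ℕ := fun j => ns (ms (φ' j)) with hσ
  have hσmono : StrictMono σ := hcomp.comp hφ'
  have hσtop : Tendsto σ atTop atTop := hσmono.tendsto_atTop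
  -- difference tends to zero
  have hdiff : Tendsto (fun j => (∫ x, (F (σ j) x : ℂ) * ψ x ∂(ρN (σ j))) -
      ∫ x, (Flim x : ℂ) * ψ x ∂(ρN (σ j))) atTop (nhds 0) := by
    rw [NormedAddCommGroup.tendsto_nhds_zero]
    intro ε hε
    have hε2 : 0 < ε / 2 := by linarith
    set δ1 : ℝ := (ε / 2) / 2 / (‖ψ‖ * Cm + 1) with hδ1def
    have hδ1 : 0 < δ1 := by positivity
    set δ2 : ℝ := (ε / 2) / 2 / (2 * M * ‖ψ‖ + 1) with hδ2def
    have hδ2 : 0 < δ2 := by positivity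
    obtain ⟨J, hJc, hJt⟩ := htight δ2 hδ2
    have hJm : MeasurableSet J := hJc.isClosed.measurableSet
    filter_upwards [hunif J hJc δ1 hδ1, hσtop.eventually hJt] with j hj1 hj2
    set N := σ j with hN
    -- rewrite the difference as a single integral
    have heq : (∫ x, (F N x : ℂ) * ψ x ∂(ρN N)) - ∫ x, (Flim x : ℂ) * ψ x ∂(ρN N) =
        ∫ x, ((F N x : ℝ) - Flim x : ℝ) * ψ x ∂(ρN N) := by
      rw [← integral_sub (hFInt N) (hFlimInt (ρN N))]
      congr 1
      funext x
      push_cast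
      ring
    rw [heq]
    have hIntd : Integrable (fun x => ((F N x : ℝ) - Flim x : ℝ) * ψ x) (ρN N) := by
      have := (hFInt N).sub (hFlimInt (ρN N))
      refine this.congr (ae_of_all _ fun x => ?_)
      simp only [Pi.sub_apply]
      push_cast
      ring
    rw [← integral_add_compl hJm hIntd]
    have hae : ∀ᵐ x ∂(ρN N), x ∈ EN N := by
      rw [ae_iff]
      convert hsupp N using 2
      rfl
    -- bound on J
    have hbJ : ‖∫ x in J, ((F N x : ℝ) - Flim x : ℝ) * ψ x ∂(ρN N)‖ ≤
        (δ1 * ‖ψ‖) * ((ρN N) J).toReal := by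
      refine norm_setIntegral_le_of_norm_le_const_ae' (measure_lt_top _ _) ?_
      filter_upwards [hae] with x hx hxJ
      rw [norm_mul, Complex.norm_real, Real.norm_eq_abs]
      exact mul_le_mul (hj1 x ⟨hxJ, hx⟩) (hψ x) (norm_nonneg _) hδ1.le
    -- bound on Jᶜ
    have hbJc : ‖∫ x in Jᶜ, ((F N x : ℝ) - Flim x : ℝ) * ψ x ∂(ρN N)‖ ≤
        (2 * M * ‖ψ‖) * ((ρN N) Jᶜ).toReal := by
      refine norm_setIntegral_le_of_norm_le_const_ae' (measure_lt_top _ _)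
        (ae_of_all _ fun x _ => ?_)
      rw [norm_mul, Complex.norm_real, Real.norm_eq_abs]
      have h1 : |F N x - Flim x| ≤ 2 * M := by
        have := hbound N x; have := hFlimbdd x
        rw [abs_le] at *
        constructor <;> linarith [this.1, this.2]
      exact mul_le_mul h1 (hψ x) (norm_nonneg _) (by linarith)
    have hmassJ : ((ρN N) J).toReal ≤ Cm :=
      le_trans (ENNReal.toReal_mono (measure_ne_top _ _) (measure_mono (subset_univ J))) (hCm N)
    have e1 : (δ1 * ‖ψ‖) * ((ρN N) J).toReal ≤ ε / 4 := by
      have h1 : (δ1 * ‖ψ‖) * ((ρN N) J).toReal ≤ δ1 * (‖ψ‖ * Cm) := by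
        rw [mul_assoc]
        exact mul_le_mul_of_nonneg_left
          (mul_le_mul_of_nonneg_left hmassJ hψ0) hδ1.le
      have h2 : δ1 * (‖ψ‖ * Cm) ≤ ε / 4 := by
        rw [hδ1def, div_mul_eq_mul_div, div_le_iff₀ (by positivity)]
        nlinarith [hε2.le, hψ0, hCm0, mul_nonneg hψ0 hCm0]
      linarith
    have e2 : (2 * M * ‖ψ‖) * ((ρN N) Jᶜ).toReal ≤ ε / 4 := by
      have h1 : (2 * M * ‖ψ‖) * ((ρN N) Jᶜ).toReal ≤ (2 * M * ‖ψ‖) * δ2 :=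
        mul_le_mul_of_nonneg_left hj2 (by positivity)
      have h2 : (2 * M * ‖ψ‖) * δ2 ≤ ε / 4 := by
        rw [hδ2def, mul_comm, div_mul_eq_mul_div, div_le_iff₀ (by positivity)]
        nlinarith [hε2.le, hψ0, hM, mul_nonneg (mul_nonneg (by norm_num : (0:ℝ) ≤ 2) hM) hψ0]
      linarith
    calc ‖(∫ x in J, ((F N x : ℝ) - Flim x : ℝ) * ψ x ∂(ρN N)) +
          ∫ x in Jᶜ, ((F N x : ℝ) - Flim x : ℝ) * ψ x ∂(ρN N)‖
        ≤ ‖∫ x in J, ((F N x : ℝ) - Flim x : ℝ) * ψ x ∂(ρN N)‖ +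
          ‖∫ x in Jᶜ, ((F N x : ℝ) - Flim x : ℝ) * ψ x ∂(ρN N)‖ := norm_add_le _ _
      _ ≤ ε / 4 + ε / 4 := add_le_add (le_trans hbJ e1) (le_trans hbJc e2)
      _ < ε := by linarith
  have hb : Tendsto (fun j => ∫ x, (Flim x : ℂ) * ψ x ∂(ρN (σ j))) atTop
      (nhds (∫ x, (Flim x : ℂ) * ψ x ∂ρ)) := hweakC.comp hσtop
  have := hdiff.add hb
  rw [zero_add] at this
  simp only [sub_add_cancel] at this
  exact this
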